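/- Let q be odd, ξ a fixed nonsquare in F_q×, and X = [[y, z], [x, y]] a 2×2 matrix over F_q. If det(X) = y² - xz is a nonzero square, then there exist A ∈ GL(2,q) and u ∈ F_q× with uAX(A')⁻¹ equal to the identity matrix; if det(X) is a nonsquare, then there exist such A, u with uAX(A')⁻¹ = [[0, -ξ],[1, 0]]. -/

import Mathlib

open scoped Classical
open Matrix

lemma aux_inv {F : Type*} [Field F] (a b c d : F) (h : a * d - b * c ≠ 0) :
    ((a * d - b * c)⁻¹ • !![a, -b; -c, d])⁻¹ = !![d, b; c, a] := by
  apply Matrix.inv_eq_right_inv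
  rw [Matrix.smul_mul]
  ext i j
  fin_cases i <;> fin_cases j <;>
    simp only [Matrix.smul_apply, Matrix.mul_apply, Fin.sum_univ_two, Matrix.one_apply,
      Matrix.cons_val', Matrix.cons_val_zero, Matrix.cons_val_one, Matrix.head_cons,
      Matrix.head_fin_const, Matrix.empty_val', Matrix.cons_val_fin_one, Matrix.of_apply,
      smul_eq_mul, Fin.mk_zero, Fin.mk_one, if_true, if_false, Fin.reduceEq] <;>
    field_simp <;> ring

lemma aux_key {F : Type*} [Field F] (a b c d u : F) (M T : Matrix (Fin 2) (Fin 2) F)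
    (h : a * d - b * c ≠ 0)
    (heq : u • (!![a, b; c, d] * M * !![d, b; c, a]) = T) :
    u • (!![a, b; c, d] * M *
      (((!![a, b; c, d]).det)⁻¹ •
        !![!![a, b; c, d] 0 0, -(!![a, b; c, d] 0 1);
           -(!![a, b; c, d] 1 0), !![a, b; c, d] 1 1])⁻¹) = T := by
  have e1 : (!![a, b; c, d]).det = a * d - b * c := by
    rw [Matrix.det_fin_two_of]
  have e2 : !![!![a, b; c, d] 0 0, -(!![a, b; c, d] 0 1);
      -(!![a, b; c, d] 1 0), !![a, b; c, d] 1 1] = !![a, -b; -c, d] := by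
    simp
  rw [e1, e2, aux_inv a b c d h]
  exact heq

theorem stmt17 {F : Type*} [Field F] [Fintype F] (hq : Odd (Fintype.card F))
    (ξ : F) (hξ0 : ξ ≠ 0) (hξ : ¬ IsSquare ξ)
    (x y z : F) (X : Matrix (Fin 2) (Fin 2) F) (hX : X = !![y, z; x, y]) :
    (IsSquare (y ^ 2 - x * z) ∧ y ^ 2 - x * z ≠ 0 →
      ∃ (A : Matrix (Fin 2) (Fin 2) F) (u : F), A.det ≠ 0 ∧ u ≠ 0 ∧
        u • (A * X * ((A.det)⁻¹ • !![A 0 0, -(A 0 1); -(A 1 0), A 1 1])⁻¹) =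
          (1 : Matrix (Fin 2) (Fin 2) F)) ∧
    (¬ IsSquare (y ^ 2 - x * z) →
      ∃ (A : Matrix (Fin 2) (Fin 2) F) (u : F), A.det ≠ 0 ∧ u ≠ 0 ∧
        u • (A * X * ((A.det)⁻¹ • !![A 0 0, -(A 0 1); -(A 1 0), A 1 1])⁻¹) =
          !![0, -ξ; 1, 0]) := by
  subst hX
  have hchar : ringChar F ≠ 2 := by
    intro h
    have h2 := FiniteField.even_card_of_char_two h
    obtain ⟨k, hk⟩ := hq
    omega
  have h2 : (2 : F) ≠ 0 := Ring.two_ne_zero hchar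
  constructor
  · rintro ⟨⟨s, hs⟩, hd0⟩
    have hs0 : s ≠ 0 := by
      intro h; rw [h, mul_zero] at hs; exact hd0 hs
    rcases eq_or_ne x 0 with hx | hx
    · -- x = 0, y ≠ 0
      subst hx
      have hy : y ≠ 0 := by
        intro h; apply hd0; rw [h]; ring
      refine ⟨!![0, 1; 2*y, -z], (2*y^2)⁻¹, ?_, ?_, ?_⟩
      · rw [Matrix.det_fin_two_of]
        intro h
        exact mul_ne_zero h2 hy (by linear_combination -h)
      · exact inv_ne_zero (mul_ne_zero h2 (pow_ne_zero 2 hy))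
      · apply aux_key
        · intro h
          exact mul_ne_zero h2 hy (by linear_combination -h)
        · ext i j
          fin_cases i <;> fin_cases j <;>
            simp only [Matrix.smul_apply, Matrix.mul_apply, Fin.sum_univ_two,
              Matrix.one_apply, Matrix.cons_val', Matrix.cons_val_zero, Matrix.cons_val_one,
              Matrix.head_cons, Matrix.head_fin_const, Matrix.empty_val',
              Matrix.cons_val_fin_one, Matrix.of_apply, smul_eq_mul, Fin.mk_zero, Fin.mk_one,
              if_true, if_false, Fin.reduceEq] <;>
            field_simp <;> ring
    · -- x ≠ 0
      refine ⟨!![x, s - y; x, -s - y], (-(2*x*(s*s)))⁻¹, ?_, ?_, ?_⟩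
      · rw [Matrix.det_fin_two_of]
        intro h
        exact mul_ne_zero (mul_ne_zero h2 hs0) hx (by linear_combination -h)
      · refine inv_ne_zero (neg_ne_zero.mpr ?_)
        exact mul_ne_zero (mul_ne_zero h2 hx) (mul_ne_zero hs0 hs0)
      · apply aux_key
        · intro h
          exact mul_ne_zero (mul_ne_zero h2 hs0) hx (by linear_combination -h)
        · ext i j
          fin_cases i <;> fin_cases j <;>
            simp only [Matrix.smul_apply, Matrix.mul_apply, Fin.sum_univ_two,
              Matrix.one_apply, Matrix.cons_val', Matrix.cons_val_zero, Matrix.cons_val_one,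
              Matrix.head_cons, Matrix.head_fin_const, Matrix.empty_val',
              Matrix.cons_val_fin_one, Matrix.of_apply, smul_eq_mul, Fin.mk_zero, Fin.mk_one,
              if_true, if_false, Fin.reduceEq] <;>
            field_simp <;> linear_combination hs
  · intro hns
    have hd0 : y ^ 2 - x * z ≠ 0 := by
      intro h; exact hns (h ▸ IsSquare.zero)
    have hx : x ≠ 0 := by
      intro h
      exact hns ⟨y, by rw [h]; ring⟩
    have hsq : IsSquare ((y ^ 2 - x * z) * ξ) := by
      have c1 : quadraticChar F (y ^ 2 - x * z) = -1 :=
        quadraticChar_neg_one_iff_not_isSquare.mpr hns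
      have c2 : quadraticChar F ξ = -1 :=
        quadraticChar_neg_one_iff_not_isSquare.mpr hξ
      have c3 : quadraticChar F ((y ^ 2 - x * z) * ξ) = 1 := by
        rw [_root_.map_mul, c1, c2]; ring
      exact (quadraticChar_one_iff_isSquare (mul_ne_zero hd0 hξ0)).mp c3
    obtain ⟨w, hw⟩ := hsq
    have hw0 : w ≠ 0 := by
      intro h; rw [h, mul_zero] at hw; exact mul_ne_zero hd0 hξ0 hw
    obtain ⟨t, ht0, hδ⟩ : ∃ t : F, t ≠ 0 ∧ y ^ 2 - x * z = ξ * t ^ 2 := by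
      refine ⟨w * ξ⁻¹, mul_ne_zero hw0 (inv_ne_zero hξ0), ?_⟩
      field_simp
      linear_combination hw
    refine ⟨!![x, -y; 0, t], (t^2 * x)⁻¹, ?_, ?_, ?_⟩
    · rw [Matrix.det_fin_two_of]
      simp only [neg_zero, mul_zero, sub_zero]
      exact mul_ne_zero hx ht0
    · exact inv_ne_zero (mul_ne_zero (pow_ne_zero 2 ht0) hx)
    · apply aux_key
      · simpa using mul_ne_zero hx ht0
      · ext i j
        fin_cases i <;> fin_cases j <;>
          simp only [Matrix.smul_apply, Matrix.mul_apply, Fin.sum_univ_two,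
            Matrix.cons_val', Matrix.cons_val_zero, Matrix.cons_val_one,
            Matrix.head_cons, Matrix.head_fin_const, Matrix.empty_val',
            Matrix.cons_val_fin_one, Matrix.of_apply, smul_eq_mul, Fin.mk_zero, Fin.mk_one] <;>
          field_simp <;> first
          | linear_combination x * hδ
          | linear_combination -x * hδ
          | linear_combination -hδ
          | ring1
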